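/- Let A be an invertible n×n lower triangular matrix with diagonal D = Diag(a_{1,1},…,a_{n,n}), and let B = I + (I − A) D⁻¹. Then the matrices E_k⁻¹ (inverses of the elementary factors of A) are precisely the elementary factors by columns of B, i.e., E_k⁻¹ coincides with B in its k-th column and with the identity elsewhere. -/

import Mathlib

/-- The elementary factor `E_k` of `A`. -/
def elemFactor {n : ℕ} (A : Matrix (Fin n) (Fin n) ℂ) (k : Fin n) :
    Matrix (Fin n) (Fin n) ℂ :=
  Matrix.of fun i j => if j = k then A i j else if i = j then 1 else 0

theorem stmt3 {n : ℕ} (A : Matrix (Fin n) (Fin n) ℂ)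
    (hlow : ∀ i j : Fin n, i < j → A i j = 0) (hA : IsUnit A) (k : Fin n) :
    (elemFactor A k)⁻¹ =
      elemFactor (1 + (1 - A) * (Matrix.diagonal fun i => A i i)⁻¹) k := by
  have hdet : A.det = ∏ i, A i i := by
    apply Matrix.det_of_lowerTriangular
    intro i j hij
    exact hlow i j hij
  have hdet0 : A.det ≠ 0 := ((Matrix.isUnit_iff_isUnit_det A).mp hA).ne_zero
  have hkk : A k k ≠ 0 := by
    intro h
    exact hdet0 (hdet.trans (Finset.prod_eq_zero (Finset.mem_univ k) h))
  have hdiag : ∀ i, A i i ≠ 0 := by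
    intro i h
    exact hdet0 (hdet.trans (Finset.prod_eq_zero (Finset.mem_univ i) h))
  have hRinv : Ring.inverse (fun i => A i i) = fun i => (A i i)⁻¹ := by
    exact Ring.inverse_unit
      ⟨fun i => A i i, fun i => (A i i)⁻¹,
        funext fun i => mul_inv_cancel₀ (hdiag i),
        funext fun i => inv_mul_cancel₀ (hdiag i)⟩
  have hB : ∀ i, (1 + (1 - A) * (Matrix.diagonal fun i => A i i)⁻¹) i k
      = (if i = k then (1:ℂ) else 0) + ((if i = k then (1:ℂ) else 0) - A i k) * (A k k)⁻¹ := by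
    intro i
    rw [Matrix.inv_diagonal, hRinv]
    simp [Matrix.add_apply, Matrix.mul_diagonal, Matrix.sub_apply, Matrix.one_apply]
  apply Matrix.inv_eq_right_inv
  ext i j
  simp only [elemFactor, Matrix.mul_apply, Matrix.of_apply, Matrix.one_apply]
  by_cases hj : j = k
  · subst hj
    simp only [if_pos rfl]
    by_cases hik : i = j
    · subst hik
      rw [Finset.sum_eq_single i]
      · rw [if_pos rfl, hB]
        simp only [if_pos rfl]
        field_simp
        simp only [if_true, if_false]
        field_simp
        ring
      · intro l _ hl
        rw [if_neg hl, if_neg (Ne.symm hl), zero_mul]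
      · simp
    · rw [Finset.sum_eq_add_of_mem i j (Finset.mem_univ i) (Finset.mem_univ j) hik ?_]
      · rw [if_neg hik, if_pos rfl, if_pos rfl, hB i, hB j]
        simp only [if_neg hik, if_pos rfl, if_neg hik]
        field_simp
        simp only [if_true]
        field_simp
        ring
      · intro l _ hl
        obtain ⟨hli, hlj⟩ := hl
        simp only [if_pos rfl, if_true]
        rw [if_neg hlj, if_neg (fun h => hli h.symm), zero_mul]
  · rw [Finset.sum_eq_single j]
    · simp [hj]
    · intro l _ hl
      simp [hj, hl]
    · simp
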